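/- Let N ≥ 1 and let p : {0,...,N} → (0,1) be any function. Define q : {0,...,N+1} → ℝ by q(a) = K * C(N+1,a) * (∏_{i=0}^{a-1} p(i)) * (∏_{i=a}^{N} (1-p(i))), where K is the normalizing constant making ∑_{a=0}^{N+1} q(a) = 1. Then each q(a) > 0 and for all a = 0,...,N, p(a) = (a+1)·q(a+1) / ((a+1)·q(a+1) + (N+1-a)·q(a)). -/

import Mathlib

/-- Inversion of the finite exchangeability relation: the generalized-binomial
pmf `q` built from predictive probabilities `p` is positive and satisfies the
direct equations recovering `p` from `q`. -/
theorem stmt_0 (N : ℕ) (hN : 1 ≤ N) (p q : ℕ → ℝ) (K : ℝ)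
    (hp : ∀ i ≤ N, p i ∈ Set.Ioo (0 : ℝ) 1)
    (hK : K = (∑ a ∈ Finset.range (N + 2),
        ((N + 1).choose a : ℝ) * (∏ i ∈ Finset.range a, p i) *
          (∏ i ∈ Finset.Icc a N, (1 - p i)))⁻¹)
    (hq : ∀ a ≤ N + 1, q a = K * ((N + 1).choose a : ℝ) *
        (∏ i ∈ Finset.range a, p i) * (∏ i ∈ Finset.Icc a N, (1 - p i))) :
    (∀ a ≤ N + 1, 0 < q a) ∧
      ∀ a ≤ N, p a =
        (((a : ℝ) + 1) * q (a + 1)) /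
          (((a : ℝ) + 1) * q (a + 1) + ((N : ℝ) + 1 - (a : ℝ)) * q a) := by
  have hfpos : ∀ b ≤ N + 1, 0 < ((N + 1).choose b : ℝ) *
      (∏ i ∈ Finset.range b, p i) * (∏ i ∈ Finset.Icc b N, (1 - p i)) := by
    intro b hb
    have h1 : (0 : ℝ) < ((N + 1).choose b : ℝ) := by
      exact_mod_cast Nat.choose_pos hb
    have h2 : (0 : ℝ) < ∏ i ∈ Finset.range b, p i := by
      apply Finset.prod_pos
      intro i hi
      have : i ≤ N := by
        have := Finset.mem_range.mp hi; omega
      exact (hp i this).1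
    have h3 : (0 : ℝ) < ∏ i ∈ Finset.Icc b N, (1 - p i) := by
      apply Finset.prod_pos
      intro i hi
      have : i ≤ N := (Finset.mem_Icc.mp hi).2
      linarith [(hp i this).2]
    positivity
  have hKpos : 0 < K := by
    rw [hK]
    apply inv_pos.mpr
    apply Finset.sum_pos'
    · intro b hb
      exact le_of_lt (hfpos b (by have := Finset.mem_range.mp hb; omega))
    · exact ⟨0, Finset.mem_range.mpr (by omega), hfpos 0 (by omega)⟩
  have hqpos : ∀ a ≤ N + 1, 0 < q a := by
    intro a ha
    rw [hq a ha]
    have := hfpos a ha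
    nlinarith
  refine ⟨hqpos, fun a ha => ?_⟩
  -- split products
  have hpr : ∏ i ∈ Finset.range (a + 1), p i = (∏ i ∈ Finset.range a, p i) * p a :=
    Finset.prod_range_succ _ _
  have hIcc : Finset.Icc a N = Finset.Ico a (N + 1) := by
    rw [Finset.Ico_add_one_right_eq_Icc]
  have hIcc' : Finset.Icc (a + 1) N = Finset.Ico (a + 1) (N + 1) := by
    rw [Finset.Ico_add_one_right_eq_Icc]
  have hpi : ∏ i ∈ Finset.Icc a N, (1 - p i) =
      (1 - p a) * ∏ i ∈ Finset.Icc (a + 1) N, (1 - p i) := by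
    rw [hIcc, hIcc', Finset.prod_eq_prod_Ico_succ_bot (by omega) _]
  have hchoose : ((a : ℝ) + 1) * ((N + 1).choose (a + 1) : ℝ) =
      ((N : ℝ) + 1 - (a : ℝ)) * ((N + 1).choose a : ℝ) := by
    have h := Nat.choose_succ_right_eq (N + 1) a
    have hc := congrArg (fun n : ℕ => (n : ℝ)) h
    have hsub : ((N + 1 - a : ℕ) : ℝ) = (N : ℝ) + 1 - (a : ℝ) := by
      have : a ≤ N + 1 := by omega
      push_cast [Nat.cast_sub this]
      ring
    push_cast at hc
    rw [hsub] at hc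
    linarith
  set M : ℝ := K * ((N + 1).choose a : ℝ) * (∏ i ∈ Finset.range a, p i) *
      (∏ i ∈ Finset.Icc (a + 1) N, (1 - p i)) with hM
  have hMpos : 0 < M := by
    have h2 : (0 : ℝ) < ∏ i ∈ Finset.range a, p i := by
      apply Finset.prod_pos
      intro i hi
      exact (hp i (by have := Finset.mem_range.mp hi; omega)).1
    have h3 : (0 : ℝ) < ∏ i ∈ Finset.Icc (a + 1) N, (1 - p i) := by
      apply Finset.prod_pos
      intro i hi
      linarith [(hp i (Finset.mem_Icc.mp hi).2).2]
    have h1 : (0 : ℝ) < ((N + 1).choose a : ℝ) := by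
      exact_mod_cast Nat.choose_pos (by omega : a ≤ N + 1)
    positivity
  have e1 : ((a : ℝ) + 1) * q (a + 1) = ((N : ℝ) + 1 - (a : ℝ)) * M * p a := by
    rw [hq (a + 1) (by omega), hpr]
    rw [hM]
    linear_combination (K * (∏ i ∈ Finset.range a, p i) *
      (∏ i ∈ Finset.Icc (a + 1) N, (1 - p i)) * p a) * hchoose
  have e2 : ((N : ℝ) + 1 - (a : ℝ)) * q a = ((N : ℝ) + 1 - (a : ℝ)) * M * (1 - p a) := by
    rw [hq a (by omega), hpi, hM]; ring
  rw [e1, e2]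
  have hc : (0 : ℝ) < ((N : ℝ) + 1 - (a : ℝ)) * M := by
    have : (a : ℝ) ≤ (N : ℝ) := by exact_mod_cast ha
    nlinarith
  set c : ℝ := ((N : ℝ) + 1 - (a : ℝ)) * M
  have hden : c * p a + c * (1 - p a) = c := by ring
  rw [hden]
  exact (mul_div_cancel_left₀ (p a) (ne_of_gt hc)).symm
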